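/- For Re(s) > 0 and y > 0: K_{s-1/2}(2πy) = (√π / Γ(s)) (πy)^{s-1/2} ∫_1^∞ (t²-1)^{s-1} e^{-2πty} dt. -/

import Mathlib

open Real MeasureTheory Set Complex

/-- The K-Bessel function `K_ν(y) = (1/2) ∫_0^∞ e^{-y(t+1/t)/2} t^ν dt/t` for `y > 0`,
with complex order `ν`. -/
noncomputable def Kbessel (ν : ℂ) (y : ℝ) : ℂ :=
  (1 / 2) * ∫ t in Ioi (0 : ℝ), Complex.exp (-(y * (t + 1 / t) / 2 : ℝ)) * (t : ℂ) ^ ν / t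

namespace KB

variable {E : Type*} [NormedAddCommGroup E] [NormedSpace ℝ E]

lemma div_image {d : ℝ} (hd : 0 < d) : (fun u : ℝ => d / u) '' Ioi 0 = Ioi 0 := by
  ext v
  constructor
  · rintro ⟨u, hu, rfl⟩
    exact div_pos hd hu
  · intro hv
    exact ⟨d / v, div_pos hd hv, by field_simp⟩

lemma integral_comp_div (g : ℝ → E) {d : ℝ} (hd : 0 < d) :
    ∫ u in Ioi (0:ℝ), g u = ∫ u in Ioi (0:ℝ), (d / u ^ 2) • g (d / u) := by
  have hderiv : ∀ u ∈ Ioi (0:ℝ), HasDerivWithinAt (fun u : ℝ => d / u) (-(d / u ^ 2)) (Ioi 0) u := by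
    intro u hu
    have h1 := ((hasDerivAt_inv (ne_of_gt hu)).const_mul d).hasDerivWithinAt (s := Ioi 0)
    have h2 : d * -(u ^ 2)⁻¹ = -(d / u ^ 2) := by field_simp
    rw [h2] at h1
    rw [show (fun u : ℝ => d / u) = fun y => d * y⁻¹ from funext fun v => div_eq_mul_inv d v]
    exact h1

  have hinj : InjOn (fun u : ℝ => d / u) (Ioi 0) := by
    intro a ha b hb h
    simp only [mem_Ioi] at ha hb
    simp only at h
    rw [div_eq_div_iff ha.ne' hb.ne'] at h
    exact (mul_left_cancel₀ hd.ne' h).symm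
  have := integral_image_eq_integral_abs_deriv_smul measurableSet_Ioi hderiv hinj g
  rw [div_image hd] at this
  rw [this]
  refine setIntegral_congr_fun measurableSet_Ioi fun u hu => ?_
  have hu' : (0:ℝ) < u := hu
  rw [abs_neg, abs_of_pos (div_pos hd (by positivity))]


lemma sq_image : (fun v : ℝ => v ^ 2) '' Ioi 0 = Ioi 0 := by
  ext v
  constructor
  · rintro ⟨u, hu, rfl⟩
    exact pow_pos (show (0:ℝ) < u from hu) 2
  · intro hv
    exact ⟨Real.sqrt v, Real.sqrt_pos.mpr hv, Real.sq_sqrt (le_of_lt hv)⟩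

lemma integral_comp_sq (g : ℝ → E) :
    ∫ u in Ioi (0:ℝ), g u = ∫ v in Ioi (0:ℝ), (2 * v) • g (v ^ 2) := by
  have hderiv : ∀ v ∈ Ioi (0:ℝ), HasDerivWithinAt (fun v : ℝ => v ^ 2) (2 * v) (Ioi 0) v := by
    intro v hv
    simpa using (hasDerivAt_pow 2 v).hasDerivWithinAt (s := Ioi 0)
  have hinj : InjOn (fun v : ℝ => v ^ 2) (Ioi 0) := by
    intro a ha b hb h
    simp only [mem_Ioi] at ha hb
    simp only at h
    nlinarith [sq_nonneg (a - b), sq_nonneg (a + b)]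
  have := integral_image_eq_integral_abs_deriv_smul measurableSet_Ioi hderiv hinj g
  rw [sq_image] at this
  rw [this]
  refine setIntegral_congr_fun measurableSet_Ioi fun v hv => ?_
  have hv' : (0:ℝ) < v := hv
  rw [abs_of_pos (by positivity)]

lemma sq_sub_one_image : (fun t : ℝ => t ^ 2 - 1) '' Ioi 1 = Ioi 0 := by
  ext w
  constructor
  · rintro ⟨t, ht, rfl⟩
    have ht' : (1:ℝ) < t := ht
    simp only [mem_Ioi]
    nlinarith
  · intro hw
    have hw' : (0:ℝ) < w := hw
    refine ⟨Real.sqrt (1 + w), ?_, ?_⟩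
    · simp only [mem_Ioi]
      have : (1:ℝ) < 1 + w := by linarith
      calc (1:ℝ) = Real.sqrt 1 := (Real.sqrt_one).symm
      _ < Real.sqrt (1 + w) := Real.sqrt_lt_sqrt zero_le_one this
    · simp only
      rw [Real.sq_sqrt (by linarith : (0:ℝ) ≤ 1 + w)]
      ring

lemma sq_sub_one_deriv : ∀ t ∈ Ioi (1:ℝ), HasDerivWithinAt (fun t : ℝ => t ^ 2 - 1) (2 * t) (Ioi 1) t := by
  intro t ht
  simpa using ((hasDerivAt_pow 2 t).sub_const 1).hasDerivWithinAt (s := Ioi 1)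

lemma sq_sub_one_inj : InjOn (fun t : ℝ => t ^ 2 - 1) (Ioi 1) := by
  intro a ha b hb h
  simp only [mem_Ioi] at ha hb
  simp only [sub_left_inj] at h
  nlinarith [sq_nonneg (a - b), sq_nonneg (a + b)]

lemma integral_comp_sq_sub_one (g : ℝ → E) :
    ∫ w in Ioi (0:ℝ), g w = ∫ t in Ioi (1:ℝ), (2 * t) • g (t ^ 2 - 1) := by
  have := integral_image_eq_integral_abs_deriv_smul measurableSet_Ioi sq_sub_one_deriv sq_sub_one_inj g
  rw [sq_sub_one_image] at this
  rw [this]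
  refine setIntegral_congr_fun measurableSet_Ioi fun t ht => ?_
  have ht' : (1:ℝ) < t := ht
  rw [abs_of_pos (by positivity)]

lemma integrableOn_comp_sq_sub_one (g : ℝ → E) :
    IntegrableOn g (Ioi (0:ℝ)) ↔ IntegrableOn (fun t => (2 * t) • g (t ^ 2 - 1)) (Ioi (1:ℝ)) := by
  have := integrableOn_image_iff_integrableOn_abs_deriv_smul measurableSet_Ioi sq_sub_one_deriv sq_sub_one_inj g
  rw [sq_sub_one_image] at this
  rw [this]
  constructor <;> intro h <;> refine h.congr_fun (fun t ht => ?_) measurableSet_Ioi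
  · have ht' : (1:ℝ) < t := ht
    beta_reduce
    rw [abs_of_pos (by positivity)]
  · have ht' : (1:ℝ) < t := ht
    beta_reduce
    rw [abs_of_pos (by positivity)]


section Glasser

variable {c : ℝ}

lemma glasser_deriv (hc : 0 < c) :
    ∀ v ∈ Ioi (0:ℝ), HasDerivWithinAt (fun v : ℝ => v - c / (2 * v)) (1 + c / (2 * v ^ 2)) (Ioi 0) v := by
  intro v hv
  have hv' : (0:ℝ) < v := hv
  have h1 : HasDerivAt (fun v : ℝ => v - c / 2 * v⁻¹) (1 - c / 2 * -(v ^ 2)⁻¹) v :=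
    (hasDerivAt_id v).sub ((hasDerivAt_inv hv'.ne').const_mul (c / 2))
  have h2 : (fun v : ℝ => v - c / 2 * v⁻¹) = fun v : ℝ => v - c / (2 * v) := by
    ext v
    rw [div_mul_eq_div_div, div_eq_mul_inv (c/2)]
  have h3 : 1 - c / 2 * -(v ^ 2)⁻¹ = 1 + c / (2 * v ^ 2) := by
    rw [div_mul_eq_div_div, div_eq_mul_inv (c/2)]
    ring
  rw [h2, h3] at h1
  exact h1.hasDerivWithinAt

lemma glasser_inj (hc : 0 < c) : InjOn (fun v : ℝ => v - c / (2 * v)) (Ioi 0) := by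
  have : StrictMonoOn (fun v : ℝ => v - c / (2 * v)) (Ioi 0) := by
    intro a ha b hb hab
    have ha' : (0:ℝ) < a := ha
    have hb' : (0:ℝ) < b := hb
    simp only
    have : c / (2 * b) < c / (2 * a) := by
      apply div_lt_div_of_pos_left hc (by positivity) (by linarith)
    linarith
  exact this.injOn

lemma glasser_image (hc : 0 < c) : (fun v : ℝ => v - c / (2 * v)) '' Ioi 0 = univ := by
  refine eq_univ_of_forall fun w => ?_
  have hR : 0 ≤ w ^ 2 + 2 * c := by positivity
  set R := Real.sqrt (w ^ 2 + 2 * c) with hRdef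
  have hR2 : R ^ 2 = w ^ 2 + 2 * c := Real.sq_sqrt hR
  have habs : |w| < R := by
    have : |w| = Real.sqrt (w ^ 2) := (Real.sqrt_sq_eq_abs w).symm
    rw [this]
    exact Real.sqrt_lt_sqrt (sq_nonneg w) (by linarith)
  have hv : 0 < (w + R) / 2 := by
    have := neg_abs_le w
    have := abs_nonneg w
    nlinarith
  refine ⟨(w + R) / 2, hv, ?_⟩
  simp only
  have h2v : 2 * ((w + R) / 2) = w + R := by ring
  rw [h2v]
  have hwR : 0 < w + R := by nlinarith [neg_abs_le w]
  field_simp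
  nlinarith

lemma glasser_aux (hc : 0 < c) :
    ∫ v in Ioi (0:ℝ), Real.exp (-(v - c / (2 * v)) ^ 2) = Real.sqrt π / 2 := by
  set g0 : ℝ → ℝ := fun v => Real.exp (-(v - c / (2 * v)) ^ 2) with hg0def
  have key : ∫ w : ℝ, Real.exp (-w ^ 2)
      = ∫ v in Ioi (0:ℝ), (1 + c / (2 * v ^ 2)) * g0 v := by
    have := integral_image_eq_integral_abs_deriv_smul measurableSet_Ioi (glasser_deriv hc)
      (glasser_inj hc) (fun w => Real.exp (-w ^ 2))
    rw [glasser_image hc, setIntegral_univ] at this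
    rw [this]
    refine setIntegral_congr_fun measurableSet_Ioi fun v hv => ?_
    have hv' : (0:ℝ) < v := hv
    rw [abs_of_pos (by positivity), smul_eq_mul]
  have hgauss : ∫ w : ℝ, Real.exp (-w ^ 2) = Real.sqrt π := by
    have := integral_gaussian 1
    simpa using this
  -- integrability of the transported function
  have hT : IntegrableOn (fun v => (1 + c / (2 * v ^ 2)) * g0 v) (Ioi (0:ℝ)) := by
    have hint : Integrable (fun w : ℝ => Real.exp (-w ^ 2)) := by
      have := integrable_exp_neg_mul_sq (b := 1) one_pos
      simpa using this
    have := (integrableOn_image_iff_integrableOn_abs_deriv_smul measurableSet_Ioi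
      (glasser_deriv hc) (glasser_inj hc) (fun w => Real.exp (-w ^ 2))).mp
      (by rw [glasser_image hc]; exact hint.integrableOn)
    refine this.congr_fun (fun v hv => ?_) measurableSet_Ioi
    have hv' : (0:ℝ) < v := hv
    beta_reduce
    rw [abs_of_pos (by positivity), smul_eq_mul]
  have hg0meas : AEStronglyMeasurable g0 (volume.restrict (Ioi (0:ℝ))) := by
    refine ContinuousOn.aestronglyMeasurable ?_ measurableSet_Ioi
    refine (Real.continuous_exp.comp_continuousOn ?_)
    refine (ContinuousOn.neg ?_)
    refine (ContinuousOn.pow ?_ 2)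
    refine (continuousOn_id.sub ?_)
    exact continuousOn_const.div (continuous_const.mul continuous_id).continuousOn
      (fun v hv => by simp [(show (0:ℝ) < v from hv).ne'])
  have hg0 : IntegrableOn g0 (Ioi (0:ℝ)) := by
    refine hT.mono' hg0meas ?_
    refine (ae_restrict_iff' measurableSet_Ioi).mpr (Filter.Eventually.of_forall fun v hv => ?_)
    have hv' : (0:ℝ) < v := hv
    have h1 : (0:ℝ) ≤ g0 v := le_of_lt (Real.exp_pos _)
    have h2 : (1:ℝ) ≤ 1 + c / (2 * v ^ 2) := by
      have : 0 ≤ c / (2 * v ^ 2) := by positivity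
      linarith
    rw [Real.norm_eq_abs, _root_.abs_of_nonneg h1]
    nlinarith
  have hh : IntegrableOn (fun v => c / (2 * v ^ 2) * g0 v) (Ioi (0:ℝ)) := by
    refine (hT.sub hg0).congr ?_
    refine Filter.Eventually.of_forall fun v => ?_
    simp only [Pi.sub_apply]
    ring
  -- symmetry: ∫ g0 = ∫ (c/(2v²)) g0
  have hsym : ∫ v in Ioi (0:ℝ), g0 v = ∫ v in Ioi (0:ℝ), c / (2 * v ^ 2) * g0 v := by
    have := integral_comp_div (E := ℝ) g0 (d := c / 2) (by positivity)
    rw [this]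
    refine setIntegral_congr_fun measurableSet_Ioi fun v hv => ?_
    have hv' : (0:ℝ) < v := hv
    have harg : c / 2 / v = c / (2 * v) := by rw [div_div]
    have hg0v : g0 (c / 2 / v) = g0 v := by
      rw [harg]
      simp only [hg0def]
      congr 1
      have h1 : c / (2 * (c / (2 * v))) = v := by
        field_simp
      rw [h1]
      ring
    rw [hg0v, smul_eq_mul]
    congr 1
    rw [div_div]
  have hsplit : ∫ v in Ioi (0:ℝ), (1 + c / (2 * v ^ 2)) * g0 v
      = (∫ v in Ioi (0:ℝ), g0 v) + ∫ v in Ioi (0:ℝ), c / (2 * v ^ 2) * g0 v := by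
    rw [← integral_add hg0 hh]
    refine setIntegral_congr_fun measurableSet_Ioi fun v hv => ?_
    ring
  have : Real.sqrt π = 2 * ∫ v in Ioi (0:ℝ), g0 v := by
    rw [← hgauss, key, hsplit, ← hsym]; ring
  linarith [this]


lemma glasser_half (hc : 0 < c) :
    ∫ u in Ioi (0:ℝ), Real.exp (-(u + c ^ 2 / (4 * u))) * u ^ (-(1/2) : ℝ)
      = Real.sqrt π * Real.exp (-c) := by
  rw [integral_comp_sq (fun u : ℝ => Real.exp (-(u + c ^ 2 / (4 * u))) * u ^ (-(1/2) : ℝ))]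
  have heq : ∀ v ∈ Ioi (0:ℝ),
      (2 * v) • (Real.exp (-(v ^ 2 + c ^ 2 / (4 * v ^ 2))) * (v ^ 2) ^ (-(1/2) : ℝ))
        = 2 * Real.exp (-c) * Real.exp (-(v - c / (2 * v)) ^ 2) := by
    intro v hv
    have hv' : (0:ℝ) < v := hv
    have h1 : ((v ^ 2 : ℝ)) ^ (-(1/2) : ℝ) = v⁻¹ := by
      rw [← Real.rpow_natCast v 2, ← Real.rpow_mul hv'.le]
      norm_num [Real.rpow_neg_one]
    have h2 : v ^ 2 + c ^ 2 / (4 * v ^ 2) = (v - c / (2 * v)) ^ 2 + c := by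
      field_simp
      ring
    rw [h1, h2, smul_eq_mul, neg_add, Real.exp_add]
    field_simp
  rw [setIntegral_congr_fun measurableSet_Ioi heq, integral_const_mul, glasser_aux hc]
  ring

lemma glasser (hc : 0 < c) :
    ∫ u in Ioi (0:ℝ), Real.exp (-(u + c ^ 2 / (4 * u))) * u ^ (-(3/2) : ℝ)
      = 2 * Real.sqrt π / c * Real.exp (-c) := by
  have hd : (0:ℝ) < c ^ 2 / 4 := by positivity
  rw [integral_comp_div (fun u : ℝ => Real.exp (-(u + c ^ 2 / (4 * u))) * u ^ (-(3/2) : ℝ)) hd]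
  have heq : ∀ u ∈ Ioi (0:ℝ),
      (c ^ 2 / 4 / u ^ 2) • (Real.exp (-(c ^ 2 / 4 / u + c ^ 2 / (4 * (c ^ 2 / 4 / u)))) *
        (c ^ 2 / 4 / u) ^ (-(3/2) : ℝ))
      = (2 / c) * (Real.exp (-(u + c ^ 2 / (4 * u))) * u ^ (-(1/2) : ℝ)) := by
    intro u hu
    have hu' : (0:ℝ) < u := hu
    have h1 : c ^ 2 / (4 * (c ^ 2 / 4 / u)) = u := by
      field_simp
    have h2 : c ^ 2 / 4 / u + u = u + c ^ 2 / (4 * u) := by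
      rw [div_div]; ring
    have h3 : ((c ^ 2 / 4 / u : ℝ)) ^ (-(3/2) : ℝ)
        = (c ^ 2 / 4) ^ (-(3/2) : ℝ) * u ^ ((3:ℝ)/2) := by
      rw [Real.div_rpow hd.le hu'.le, Real.rpow_neg hu'.le, div_eq_mul_inv, inv_inv]
    have h4 : ((c ^ 2 / 4 : ℝ)) ^ (-(3/2) : ℝ) = (c / 2) ^ (-(3:ℝ)) := by
      have : c ^ 2 / 4 = (c / 2) ^ (2:ℕ) := by ring
      rw [this, ← Real.rpow_natCast (c/2) 2, ← Real.rpow_mul (by positivity)]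
      norm_num
    have h5 : (c ^ 2 / 4 / u ^ 2) * ((c / 2) ^ (-(3:ℝ)) * u ^ ((3:ℝ)/2)) 
        = (2 / c) * u ^ (-(1/2) : ℝ) := by
      have hc2 : (0:ℝ) < c / 2 := by positivity
      rw [Real.rpow_neg hc2.le]
      have h6 : ((c/2 : ℝ)) ^ ((3:ℝ)) = (c/2)^(3:ℕ) := by
        rw [← Real.rpow_natCast (c/2) 3]; norm_num
      rw [h6]
      have h7 : u ^ ((3:ℝ)/2) = u ^ (-(1/2) : ℝ) * u ^ (2:ℕ) := by
        rw [← Real.rpow_natCast u 2, ← Real.rpow_add hu']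
        norm_num
      rw [h7]
      field_simp
      ring
    rw [h1, h2, h3, h4, smul_eq_mul]
    calc c ^ 2 / 4 / u ^ 2 * (Real.exp (-(u + c ^ 2 / (4 * u))) * ((c / 2) ^ (-(3:ℝ)) * u ^ ((3:ℝ)/2)))
        = (c ^ 2 / 4 / u ^ 2 * ((c / 2) ^ (-(3:ℝ)) * u ^ ((3:ℝ)/2))) * Real.exp (-(u + c ^ 2 / (4 * u))) := by ring
      _ = (2 / c) * (Real.exp (-(u + c ^ 2 / (4 * u))) * u ^ (-(1/2) : ℝ)) := by rw [h5]; ring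
  rw [setIntegral_congr_fun measurableSet_Ioi heq, integral_const_mul, glasser_half hc]
  field_simp

end Glasser


/-- `exp (-(u + d/u)) * u ^ β` is integrable on `(0, ∞)` for `d > 0`. -/
lemma integrableOn_exp_add_div {d : ℝ} (hd : 0 < d) (β : ℝ) :
    IntegrableOn (fun u : ℝ => Real.exp (-(u + d / u)) * u ^ β) (Ioi 0) := by
  set k : ℕ := ⌈-β⌉₊ with hk
  have hβk : 0 ≤ β + k := by
    have := Nat.le_ceil (-β)
    rw [← hk] at this
    linarith
  have hmaj : IntegrableOn
      (fun u : ℝ => (k.factorial * d ^ (-(k:ℝ))) * (Real.exp (-u) * u ^ (β + k))) (Ioi 0) := by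
    have h := (Real.GammaIntegral_convergent (s := β + k + 1) (by linarith)).const_mul
      ((k.factorial : ℝ) * d ^ (-(k:ℝ)))
    simpa [IntegrableOn] using h
  refine hmaj.mono' ?_ ?_
  · refine ContinuousOn.aestronglyMeasurable ?_ measurableSet_Ioi
    refine ContinuousOn.mul ?_ ?_
    · refine Real.continuous_exp.comp_continuousOn ?_
      refine ContinuousOn.neg ?_
      exact continuousOn_id.add (continuousOn_const.div continuousOn_id
        (fun u hu => (show (0:ℝ) < u from hu).ne'))
    · exact fun u hu => (Real.continuousAt_rpow_const u β
        (Or.inl (show (0:ℝ) < u from hu).ne')).continuousWithinAt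
  · refine (ae_restrict_iff' measurableSet_Ioi).mpr (Filter.Eventually.of_forall fun u hu => ?_)
    have hu' : (0:ℝ) < u := hu
    have hpos : (0:ℝ) ≤ Real.exp (-(u + d / u)) * u ^ β := by positivity
    rw [Real.norm_eq_abs, _root_.abs_of_nonneg hpos]
    have key : Real.exp (-(d / u)) ≤ k.factorial * d ^ (-(k:ℝ)) * u ^ (k:ℝ) := by
      have h1 : (d / u) ^ k / k.factorial ≤ Real.exp (d / u) :=
        Real.pow_div_factorial_le_exp (x := d / u) (by positivity) k
      have h2 : Real.exp (-(d / u)) = (Real.exp (d / u))⁻¹ := by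
        rw [Real.exp_neg]
      rw [h2]
      have h3 : (Real.exp (d / u))⁻¹ ≤ ((d / u) ^ k / k.factorial)⁻¹ := by
        apply inv_anti₀
        · positivity
        · exact h1
      refine h3.trans ?_
      have hdK : d ^ (k:ℝ) ≠ 0 := (Real.rpow_pos_of_pos hd _).ne'
      rw [← Real.rpow_natCast (d/u) k, Real.div_rpow hd.le hu'.le, Real.rpow_neg hd.le,
        div_div, inv_div]
      apply le_of_eq
      field_simp
    calc Real.exp (-(u + d / u)) * u ^ β
        = Real.exp (-(d / u)) * (Real.exp (-u) * u ^ β) := by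
          rw [neg_add, Real.exp_add]; ring
      _ ≤ (k.factorial * d ^ (-(k:ℝ)) * u ^ (k:ℝ)) * (Real.exp (-u) * u ^ β) := by
          apply mul_le_mul_of_nonneg_right key (by positivity)
      _ = (k.factorial * d ^ (-(k:ℝ))) * (Real.exp (-u) * (u ^ β * u ^ (k:ℝ))) := by ring
      _ = (k.factorial * d ^ (-(k:ℝ))) * (Real.exp (-u) * u ^ (β + k)) := by
          rw [← Real.rpow_add hu']


lemma integral_cpow_mul_exp {s : ℂ} (hs : 0 < s.re) {b : ℝ} (hb : 0 < b) :
    ∫ w in Ioi (0:ℝ), (w:ℂ) ^ (s - 1) * Complex.exp (-(b * w : ℝ))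
      = (1/(b:ℂ)) ^ s * Complex.Gamma s := by
  rw [← Complex.integral_cpow_mul_exp_neg_mul_Ioi hs hb]
  refine setIntegral_congr_fun measurableSet_Ioi fun w hw => ?_
  push_cast
  ring_nf

lemma integrableOn_cpow_mul_exp {s : ℂ} (hs : 0 < s.re) {b : ℝ} (hb : 0 < b) :
    IntegrableOn (fun w : ℝ => (w:ℂ) ^ (s - 1) * Complex.exp (-(b * w : ℝ))) (Ioi 0) := by
  have h := Complex.GammaIntegral_convergent hs
  rw [← mul_zero b, ← integrableOn_Ioi_comp_mul_left_iff _ _ hb] at h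
  have hb' : ((b:ℂ)) ^ (s - 1) ≠ 0 := by
    rw [Ne, Complex.cpow_eq_zero_iff, not_and_or]
    exact Or.inl (Complex.ofReal_ne_zero.mpr hb.ne')
  refine MeasureTheory.IntegrableOn.congr_fun (h.const_mul (1 / (b:ℂ) ^ (s - 1)))
    (fun w hw => ?_) measurableSet_Ioi
  have hw' : (0:ℝ) < w := hw
  rw [show ((b * w : ℝ):ℂ) = ((b:ℝ):ℂ) * ((w:ℝ):ℂ) by push_cast; ring,
    Complex.mul_cpow_ofReal_nonneg hb.le hw'.le, Complex.ofReal_exp]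
  push_cast
  field_simp

lemma glasser_complex {c : ℝ} (hc : 0 < c) :
    ∫ u in Ioi (0:ℝ), Complex.exp (-(u + c ^ 2 / (4 * u) : ℝ)) * ((u ^ (-(3/2) : ℝ) : ℝ) : ℂ)
      = ((2 * Real.sqrt π / c * Real.exp (-c) : ℝ) : ℂ) := by
  have h1 : ∀ u ∈ Ioi (0:ℝ), Complex.exp (-(u + c ^ 2 / (4 * u) : ℝ)) * ((u ^ (-(3/2) : ℝ) : ℝ) : ℂ)
      = ((Real.exp (-(u + c ^ 2 / (4 * u))) * u ^ (-(3/2) : ℝ) : ℝ) : ℂ) := by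
    intro u hu
    rw [← Complex.ofReal_neg, ← Complex.ofReal_exp, ← Complex.ofReal_mul]
  rw [setIntegral_congr_fun measurableSet_Ioi h1]
  have hint : IntegrableOn (fun u : ℝ => Real.exp (-(u + c ^ 2 / (4 * u))) * u ^ (-(3/2) : ℝ))
      (Ioi 0) := by
    have h2 := integrableOn_exp_add_div (d := c ^ 2 / 4) (by positivity) (-(3/2))
    refine h2.congr_fun (fun u hu => ?_) measurableSet_Ioi
    beta_reduce
    rw [div_div]
  have h3 := ContinuousLinearMap.integral_comp_comm Complex.ofRealCLM hint
  simp only [Complex.ofRealCLM_apply] at h3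
  rw [h3, glasser hc]

section Jside

variable {s : ℂ} {x : ℝ}

/-- The inner function of the double integral. -/
noncomputable def F (s : ℂ) (x : ℝ) (t u : ℝ) : ℂ :=
  ((t ^ 2 - 1 : ℝ) : ℂ) ^ (s - 1) * t *
    (Complex.exp (-(u + x ^ 2 * t ^ 2 / (4 * u) : ℝ)) * ((u ^ (-(3/2) : ℝ) : ℝ) : ℂ))

/-- The function after the substitution `w = t² - 1`. -/
noncomputable def gI (s : ℂ) (x : ℝ) (u w : ℝ) : ℂ :=
  (1/2 : ℂ) * (((w : ℝ) : ℂ) ^ (s - 1) *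
    (Complex.exp (-(u + x ^ 2 * (1 + w) / (4 * u) : ℝ)) * ((u ^ (-(3/2) : ℝ) : ℝ) : ℂ)))

lemma F_eq_smul (hx : 0 < x) {u : ℝ} (hu : 0 < u) {t : ℝ} (ht : 1 < t) :
    F s x t u = (2 * t) • gI s x u (t ^ 2 - 1) := by
  rw [F, gI]
  have h1 : x ^ 2 * (1 + (t ^ 2 - 1)) / (4 * u) = x ^ 2 * t ^ 2 / (4 * u) := by ring_nf
  rw [h1, Complex.real_smul]
  push_cast
  ring

lemma gI_eq (hx : 0 < x) {u : ℝ} (hu : 0 < u) (w : ℝ) :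
    gI s x u w = ((1/2 : ℂ) * (Complex.exp (-(u + x ^ 2 / (4 * u) : ℝ)) *
        ((u ^ (-(3/2) : ℝ) : ℝ) : ℂ))) *
      ((w : ℂ) ^ (s - 1) * Complex.exp (-(x ^ 2 / (4 * u) * w : ℝ))) := by
  rw [gI]
  have h1 : (u + x ^ 2 * (1 + w) / (4 * u) : ℝ) = (u + x ^ 2 / (4 * u)) + x ^ 2 / (4 * u) * w := by
    field_simp
    ring
  rw [h1]
  push_cast
  rw [neg_add, Complex.exp_add]
  ring

lemma gI_integrableOn (hs : 0 < s.re) (hx : 0 < x) {u : ℝ} (hu : 0 < u) :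
    IntegrableOn (gI s x u) (Ioi 0) := by
  have hb : (0:ℝ) < x ^ 2 / (4 * u) := by positivity
  have h := (integrableOn_cpow_mul_exp hs hb).const_mul
    ((1/2 : ℂ) * (Complex.exp (-(u + x ^ 2 / (4 * u) : ℝ)) * ((u ^ (-(3/2) : ℝ) : ℝ) : ℂ)))
  exact MeasureTheory.IntegrableOn.congr_fun h (fun w hw => (gI_eq hx hu w).symm) measurableSet_Ioi

lemma F_integrableOn_t (hs : 0 < s.re) (hx : 0 < x) {u : ℝ} (hu : 0 < u) :
    IntegrableOn (fun t => F s x t u) (Ioi 1) := by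
  have h := (integrableOn_comp_sq_sub_one (gI s x u)).mp (gI_integrableOn hs hx hu)
  exact MeasureTheory.IntegrableOn.congr_fun h (fun t ht => (F_eq_smul hx hu ht).symm) measurableSet_Ioi

lemma F_integral_t (hs : 0 < s.re) (hx : 0 < x) {u : ℝ} (hu : 0 < u) :
    ∫ t in Ioi (1:ℝ), F s x t u
      = ((1/2 : ℂ) * Complex.Gamma s * ((4 / x ^ 2 : ℝ) : ℂ) ^ s) *
        (Complex.exp (-(u + x ^ 2 / (4 * u) : ℝ)) * (u:ℂ) ^ s * ((u ^ (-(3/2) : ℝ) : ℝ) : ℂ)) := by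
  have hb : (0:ℝ) < x ^ 2 / (4 * u) := by positivity
  have h1 : ∫ t in Ioi (1:ℝ), F s x t u = ∫ w in Ioi (0:ℝ), gI s x u w := by
    rw [integral_comp_sq_sub_one (gI s x u)]
    exact setIntegral_congr_fun measurableSet_Ioi fun t ht => F_eq_smul hx hu ht
  rw [h1, setIntegral_congr_fun measurableSet_Ioi (fun w (hw : w ∈ Ioi (0:ℝ)) => gI_eq hx hu w),
    integral_const_mul, integral_cpow_mul_exp hs hb]
  have h2 : (1 / ((x ^ 2 / (4 * u) : ℝ) : ℂ)) ^ s = ((4 / x ^ 2 : ℝ) : ℂ) ^ s * (u:ℂ) ^ s := by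
    rw [show (1 / ((x ^ 2 / (4 * u) : ℝ) : ℂ)) = (((4 / x ^ 2) * u : ℝ) : ℂ) by
      push_cast; field_simp]
    rw [show (((4 / x ^ 2) * u : ℝ) : ℂ) = ((4 / x ^ 2 : ℝ) : ℂ) * ((u : ℝ) : ℂ) by push_cast; ring]
    exact Complex.mul_cpow_ofReal_nonneg (by positivity) hu.le s
  rw [h2]
  ring


/-- Real version for norm computations. -/
noncomputable def Fr (σ : ℝ) (x u w : ℝ) : ℝ :=
  (1/2) * (w ^ (σ - 1) * (Real.exp (-(u + x ^ 2 * (1 + w) / (4 * u))) * u ^ (-(3/2) : ℝ)))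

lemma F_norm (hx : 0 < x) {u : ℝ} (hu : 0 < u) {t : ℝ} (ht : 1 < t) :
    ‖F s x t u‖ = (2 * t) • Fr s.re x u (t ^ 2 - 1) := by
  have ht2 : (0:ℝ) < t ^ 2 - 1 := by nlinarith
  have h1 : x ^ 2 * (1 + (t ^ 2 - 1)) / (4 * u) = x ^ 2 * t ^ 2 / (4 * u) := by ring_nf
  rw [F, Fr, h1, smul_eq_mul]
  rw [norm_mul, norm_mul, norm_mul, Complex.norm_real, Complex.norm_real,
    Real.norm_eq_abs, Real.norm_eq_abs,
    Complex.norm_exp, Complex.norm_cpow_eq_rpow_re_of_pos ht2]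
  have h2 : ((-(u + x ^ 2 * t ^ 2 / (4 * u) : ℝ) : ℂ)).re = -(u + x ^ 2 * t ^ 2 / (4 * u)) := by
    rw [← Complex.ofReal_neg, Complex.ofReal_re]
  rw [h2]
  have h3 : (s - 1).re = s.re - 1 := by simp
  rw [h3, abs_of_pos (by positivity : (0:ℝ) < t),
    abs_of_pos (Real.rpow_pos_of_pos hu _)]
  ring

lemma F_norm_integral_t (hs : 0 < s.re) (hx : 0 < x) {u : ℝ} (hu : 0 < u) :
    ∫ t in Ioi (1:ℝ), ‖F s x t u‖
      = ((1/2) * Real.Gamma s.re * (4 / x ^ 2) ^ s.re) *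
        (Real.exp (-(u + x ^ 2 / (4 * u))) * u ^ (s.re - 3/2)) := by
  have hb : (0:ℝ) < x ^ 2 / (4 * u) := by positivity
  have h1 : ∫ t in Ioi (1:ℝ), ‖F s x t u‖ = ∫ w in Ioi (0:ℝ), Fr s.re x u w := by
    rw [integral_comp_sq_sub_one (Fr s.re x u)]
    exact setIntegral_congr_fun measurableSet_Ioi fun t ht => F_norm hx hu ht
  have h2 : ∀ w ∈ Ioi (0:ℝ), Fr s.re x u w
      = ((1/2) * (Real.exp (-(u + x ^ 2 / (4 * u))) * u ^ (-(3/2) : ℝ))) *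
        (w ^ (s.re - 1) * Real.exp (-(x ^ 2 / (4 * u) * w))) := by
    intro w hw
    rw [Fr]
    have he : (u + x ^ 2 * (1 + w) / (4 * u) : ℝ) = (u + x ^ 2 / (4 * u)) + x ^ 2 / (4 * u) * w := by
      field_simp
      ring
    rw [he, neg_add, Real.exp_add]
    ring
  rw [h1, setIntegral_congr_fun measurableSet_Ioi h2, integral_const_mul,
    Real.integral_rpow_mul_exp_neg_mul_Ioi hs hb]
  have h3 : (1 / (x ^ 2 / (4 * u)) : ℝ) ^ s.re = (4 / x ^ 2) ^ s.re * u ^ s.re := by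
    rw [show (1 / (x ^ 2 / (4 * u)) : ℝ) = (4 / x ^ 2) * u by field_simp]
    exact Real.mul_rpow (by positivity) hu.le
  rw [h3]
  have h4 : u ^ (-(3/2) : ℝ) * u ^ s.re = u ^ (s.re - 3/2) := by
    rw [← Real.rpow_add hu]
    ring_nf
  calc (1/2) * (Real.exp (-(u + x ^ 2 / (4 * u))) * u ^ (-(3/2) : ℝ)) *
        ((4 / x ^ 2) ^ s.re * u ^ s.re * Real.Gamma s.re)
      = (1/2) * Real.Gamma s.re * (4 / x ^ 2) ^ s.re *
        (Real.exp (-(u + x ^ 2 / (4 * u))) * (u ^ (-(3/2) : ℝ) * u ^ s.re)) := by ring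
    _ = _ := by rw [h4]

lemma F_continuousOn (hx : 0 < x) :
    ContinuousOn (Function.uncurry (F s x)) (Ioi 1 ×ˢ Ioi 0) := by
  refine continuousOn_of_forall_continuousAt fun p hp => ?_
  obtain ⟨hp1, hp2⟩ := hp
  have hp1' : (1:ℝ) < p.1 := hp1
  have hp2' : (0:ℝ) < p.2 := hp2
  have hA : ContinuousAt (fun p : ℝ × ℝ => ((p.1 ^ 2 - 1 : ℝ) : ℂ) ^ (s - 1)) p := by
    have hbase : ContinuousAt (fun p : ℝ × ℝ => ((p.1 ^ 2 - 1 : ℝ) : ℂ)) p := by fun_prop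
    have hmem : ((p.1 ^ 2 - 1 : ℝ) : ℂ) ∈ Complex.slitPlane :=
      Complex.ofReal_mem_slitPlane.mpr (by nlinarith)
    exact ContinuousAt.comp (g := (· ^ (s - 1))) (continuousAt_cpow_const hmem) hbase
  have hB : ContinuousAt (fun p : ℝ × ℝ => ((p.1 : ℝ) : ℂ)) p := by fun_prop
  have hr : ContinuousAt (fun p : ℝ × ℝ => p.2 + x ^ 2 * p.1 ^ 2 / (4 * p.2)) p := by
    apply ContinuousAt.add continuousAt_snd
    apply ContinuousAt.div (by fun_prop) (by fun_prop)
    exact ne_of_gt (by positivity)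
  have hC : ContinuousAt (fun p : ℝ × ℝ =>
      Complex.exp (-(p.2 + x ^ 2 * p.1 ^ 2 / (4 * p.2) : ℝ))) p := by
    exact Complex.continuous_exp.continuousAt.comp
      ((Complex.continuous_ofReal.continuousAt.comp hr).neg)
  have hD : ContinuousAt (fun p : ℝ × ℝ => ((p.2 ^ (-(3/2) : ℝ) : ℝ) : ℂ)) p := by
    refine Complex.continuous_ofReal.continuousAt.comp ?_
    exact (Real.continuousAt_rpow_const p.2 _ (Or.inl hp2'.ne')).comp continuousAt_snd
  exact ((hA.mul hB).mul (hC.mul hD))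

lemma F_uncurry_integrable (hs : 0 < s.re) (hx : 0 < x) :
    Integrable (Function.uncurry (F s x))
      ((volume.restrict (Ioi 1)).prod (volume.restrict (Ioi 0))) := by
  have hmeas : AEStronglyMeasurable (Function.uncurry (F s x))
      ((volume.restrict (Ioi 1)).prod (volume.restrict (Ioi 0))) := by
    rw [Measure.prod_restrict]
    exact (F_continuousOn hx).aestronglyMeasurable (measurableSet_Ioi.prod measurableSet_Ioi)
  rw [integrable_prod_iff' hmeas]
  constructor
  · refine (ae_restrict_iff' measurableSet_Ioi).mpr (Filter.Eventually.of_forall fun u hu => ?_)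
    exact F_integrableOn_t hs hx hu
  · have hC := (integrableOn_exp_add_div (d := x ^ 2 / 4) (by positivity) (s.re - 3/2)).const_mul
      ((1/2) * Real.Gamma s.re * (4 / x ^ 2) ^ s.re)
    refine hC.congr ?_
    refine (ae_restrict_iff' measurableSet_Ioi).mpr (Filter.Eventually.of_forall fun u hu => ?_)
    have hu' : (0:ℝ) < u := hu
    show (1/2) * Real.Gamma s.re * (4 / x ^ 2) ^ s.re
        * (Real.exp (-(u + x ^ 2 / 4 / u)) * u ^ (s.re - 3/2))
      = ∫ t in Ioi (1:ℝ), ‖F s x t u‖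
    rw [show x ^ 2 / 4 / u = x ^ 2 / (4 * u) by rw [div_div]]
    exact (F_norm_integral_t hs hx hu').symm

lemma J_side (hs : 0 < s.re) (hx : 0 < x) :
    ∫ t in Ioi (1:ℝ), ((t ^ 2 - 1 : ℝ) : ℂ) ^ (s - 1) * Complex.exp (-(x * t : ℝ))
      = ((x / (2 * Real.sqrt π) : ℝ) : ℂ) *
          ((1/2 : ℂ) * Complex.Gamma s * ((4 / x ^ 2 : ℝ) : ℂ) ^ s *
            ∫ u in Ioi (0:ℝ), Complex.exp (-(u + x ^ 2 / (4 * u) : ℝ)) * (u:ℂ) ^ s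
              * ((u ^ (-(3/2) : ℝ) : ℝ) : ℂ)) := by
  have hπ : (0:ℝ) < Real.sqrt π := Real.sqrt_pos.mpr Real.pi_pos
  have hstep1 : ∀ t ∈ Ioi (1:ℝ), ((t ^ 2 - 1 : ℝ) : ℂ) ^ (s - 1) * Complex.exp (-(x * t : ℝ))
      = ((x / (2 * Real.sqrt π) : ℝ) : ℂ) * ∫ u in Ioi (0:ℝ), F s x t u := by
    intro t ht
    have ht' : (1:ℝ) < t := ht
    have ht0 : (0:ℝ) < t := by linarith
    have hxt : (0:ℝ) < x * t := by positivity
    have hFint : ∫ u in Ioi (0:ℝ), F s x t u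
        = ((t ^ 2 - 1 : ℝ) : ℂ) ^ (s - 1) * (t:ℂ) *
          ((2 * Real.sqrt π / (x * t) * Real.exp (-(x * t)) : ℝ) : ℂ) := by
      rw [show (fun u : ℝ => F s x t u) = fun u : ℝ => (((t ^ 2 - 1 : ℝ) : ℂ) ^ (s - 1) * (t:ℂ)) *
          (Complex.exp (-(u + x ^ 2 * t ^ 2 / (4 * u) : ℝ)) * ((u ^ (-(3/2) : ℝ) : ℝ) : ℂ))
        from rfl]
      rw [integral_const_mul]
      congr 1
      rw [← glasser_complex hxt]
      refine setIntegral_congr_fun measurableSet_Ioi fun u hu => ?_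
      rw [show (x * t) ^ 2 / (4 * u) = x ^ 2 * t ^ 2 / (4 * u) by ring_nf]
    rw [hFint]
    have key : (x / (2 * Real.sqrt π)) * (t * (2 * Real.sqrt π / (x * t) * Real.exp (-(x * t))))
        = Real.exp (-(x * t)) := by
      field_simp
    calc ((t ^ 2 - 1 : ℝ) : ℂ) ^ (s - 1) * Complex.exp (-(x * t : ℝ))
        = ((t ^ 2 - 1 : ℝ) : ℂ) ^ (s - 1) *
            (((x / (2 * Real.sqrt π)) * (t * (2 * Real.sqrt π / (x * t) * Real.exp (-(x * t)))) : ℝ) : ℂ) := by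
          rw [key, ← Complex.ofReal_neg, ← Complex.ofReal_exp]
      _ = _ := by push_cast; ring
  rw [setIntegral_congr_fun measurableSet_Ioi hstep1, integral_const_mul]
  congr 1
  have hswap := integral_integral_swap (f := fun t u => F s x t u)
    (by exact F_uncurry_integrable hs hx)
  rw [hswap]
  rw [setIntegral_congr_fun measurableSet_Ioi
    (fun u (hu : u ∈ Ioi (0:ℝ)) => F_integral_t hs hx hu), integral_const_mul]

end Jside

lemma const_identity (s : ℂ) (hs : 0 < s.re) {x : ℝ} (hx : 0 < x) :
    ((Real.sqrt π : ℂ)) / Complex.Gamma s * ((x / 2 : ℝ) : ℂ) ^ (s - 1/2) *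
        (((x / (2 * Real.sqrt π)) : ℝ) : ℂ) *
        ((1/2 : ℂ) * Complex.Gamma s * ((4 / x ^ 2 : ℝ) : ℂ) ^ s)
      = (1/2 : ℂ) * ((2 / x : ℝ) : ℂ) ^ (s - 1/2) := by
  have hπ : (0:ℝ) < Real.sqrt π := Real.sqrt_pos.mpr Real.pi_pos
  set A : ℂ := ((2 / x : ℝ) : ℂ) with hA
  have hApos : (0:ℝ) < 2 / x := by positivity
  have hA0 : A ≠ 0 := Complex.ofReal_ne_zero.mpr hApos.ne'
  have hGamma : Complex.Gamma s ≠ 0 := Complex.Gamma_ne_zero_of_re_pos hs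
  have hsqrt : ((Real.sqrt π : ℂ)) ≠ 0 := Complex.ofReal_ne_zero.mpr hπ.ne'
  have hhalf : ((x / 2 : ℝ) : ℂ) ^ (s - 1/2) = (A ^ (s - 1/2))⁻¹ := by
    rw [show ((x / 2 : ℝ) : ℂ) = A⁻¹ by
      rw [hA, ← Complex.ofReal_inv, inv_div]]
    exact Complex.inv_cpow A _ (by
      rw [hA, Complex.arg_ofReal_of_nonneg hApos.le]
      exact Real.pi_ne_zero.symm)
  have hquad : ((4 / x ^ 2 : ℝ) : ℂ) ^ s = A ^ s * A ^ s := by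
    rw [show ((4 / x ^ 2 : ℝ) : ℂ) = A * A by
      rw [hA, ← Complex.ofReal_mul]
      norm_num
      ring]
    exact Complex.mul_cpow_ofReal_nonneg hApos.le hApos.le s
  have hAA : A ^ s * A ^ s = A ^ (s - 1/2) * A ^ (s - 1/2) * A := by
    rw [← Complex.cpow_add _ _ hA0, ← Complex.cpow_add _ _ hA0]
    nth_rewrite 3 [← Complex.cpow_one A]
    rw [← Complex.cpow_add _ _ hA0]
    congr 1
    ring
  have hν0 : A ^ (s - 1/2) ≠ 0 := by
    rw [Ne, Complex.cpow_eq_zero_iff, not_and_or]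
    exact Or.inl hA0
  have hxA : ((x : ℝ) : ℂ) * A = 2 := by
    rw [hA, ← Complex.ofReal_mul, show x * (2 / x) = 2 by field_simp]
    norm_num
  have hcast : (((x / (2 * Real.sqrt π)) : ℝ) : ℂ) = (x : ℂ) / (2 * ((Real.sqrt π : ℂ))) := by
    push_cast
    ring
  rw [hhalf, hquad, hAA, hcast, div_eq_mul_inv ((Real.sqrt π : ℂ)) (Complex.Gamma s),
    div_eq_mul_inv ((x:ℂ)), mul_inv]
  trans (((Real.sqrt π : ℂ)) * ((Real.sqrt π : ℂ))⁻¹) *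
      (Complex.Gamma s * (Complex.Gamma s)⁻¹) *
      ((A ^ (s - 1/2))⁻¹ * A ^ (s - 1/2)) * (((x:ℝ):ℂ) * A) * A ^ (s - 1/2) * (2⁻¹ * (1/2))
  · ring
  · rw [mul_inv_cancel₀ hsqrt, mul_inv_cancel₀ hGamma, inv_mul_cancel₀ hν0, hxA]
    ring

end KB

namespace KB

lemma K_side (s : ℂ) {x : ℝ} (hx : 0 < x) :
    Kbessel (s - 1/2) x
      = (1/2) * ((2 / x : ℝ) : ℂ) ^ (s - 1/2) *
        ∫ u in Ioi (0:ℝ), Complex.exp (-(u + x ^ 2 / (4 * u) : ℝ)) * (u:ℂ) ^ s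
          * ((u ^ (-(3/2) : ℝ) : ℝ) : ℂ) := by
  rw [Kbessel]
  set ν := s - 1/2 with hν
  set A : ℂ := ((2 / x : ℝ) : ℂ) with hA
  have hApos : (0:ℝ) < 2 / x := by positivity
  have hAne : A ≠ 0 := Complex.ofReal_ne_zero.mpr hApos.ne'
  have hAinv : A⁻¹ = ((x / 2 : ℝ) : ℂ) := by
    rw [hA, ← Complex.ofReal_inv]
    norm_num
  set g : ℝ → ℂ := fun t => Complex.exp (-(x * (t + 1 / t) / 2 : ℝ)) * (t:ℂ) ^ ν / t with hg
  have h0 := integral_comp_mul_left_Ioi g 0 hApos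
  rw [mul_zero] at h0
  have h1 : ∫ t in Ioi (0:ℝ), g t = (2 / x) • ∫ u in Ioi (0:ℝ), g (2 / x * u) := by
    rw [h0, smul_smul, mul_inv_cancel₀ hApos.ne', one_smul]
  have h2 : ∀ u ∈ Ioi (0:ℝ), g (2 / x * u)
      = (A ^ ν * ((x / 2 : ℝ) : ℂ)) * (Complex.exp (-(u + x ^ 2 / (4 * u) : ℝ)) * (u:ℂ) ^ s
          * ((u ^ (-(3/2) : ℝ) : ℝ) : ℂ)) := by
    intro u hu
    have hu' : (0:ℝ) < u := hu
    have hune : (u:ℂ) ≠ 0 := Complex.ofReal_ne_zero.mpr hu'.ne'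
    have he : x * (2 / x * u + 1 / (2 / x * u)) / 2 = u + x ^ 2 / (4 * u) := by
      field_simp
      ring
    have hcast : ((2 / x * u : ℝ) : ℂ) = A * u := by simp only [hA]; push_cast; ring
    have hcpow : ((2 / x * u : ℝ) : ℂ) ^ ν = A ^ ν * (u:ℂ) ^ ν := by
      rw [show ((2 / x * u : ℝ) : ℂ) = ((2/x : ℝ) : ℂ) * ((u:ℝ):ℂ) by push_cast; ring]
      exact Complex.mul_cpow_ofReal_nonneg hApos.le hu'.le ν
    have hupow : (u:ℂ) ^ ν / u = (u:ℂ) ^ s * ((u ^ (-(3/2) : ℝ) : ℝ) : ℂ) := by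
      rw [Complex.ofReal_cpow hu'.le, show (((-(3/2) : ℝ)):ℂ) = -(3/2) by norm_num,
        ← Complex.cpow_add _ _ hune, div_eq_iff hune]
      nth_rewrite 3 [← Complex.cpow_one (u:ℂ)]
      rw [← Complex.cpow_add _ _ hune]
      congr 1
      rw [hν]
      ring
    simp only [hg]
    rw [he, hcpow, hcast]
    rw [← hAinv]
    have hsplit : Complex.exp (-((u + x ^ 2 / (4 * u) : ℝ) : ℂ)) * (A ^ ν * (u:ℂ) ^ ν) / (A * (u:ℂ))
        = (A ^ ν * A⁻¹) * (Complex.exp (-((u + x ^ 2 / (4 * u) : ℝ) : ℂ)) * ((u:ℂ) ^ ν / (u:ℂ))) := by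
      field_simp
    rw [hsplit, hupow]
    ring
  rw [h1, setIntegral_congr_fun measurableSet_Ioi h2, integral_const_mul, Complex.real_smul]
  have key2 : ((2 / x : ℝ) : ℂ) * ((x / 2 : ℝ) : ℂ) = 1 := by
    rw [← Complex.ofReal_mul, show (2 / x) * (x / 2) = 1 by field_simp, Complex.ofReal_one]
  set I : ℂ := ∫ u in Ioi (0:ℝ), Complex.exp (-(u + x ^ 2 / (4 * u) : ℝ)) * (u:ℂ) ^ s
          * ((u ^ (-(3/2) : ℝ) : ℝ) : ℂ) with hI
  linear_combination (A ^ ν * I / 2) * key2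

end KB

/-- For `Re s > 0` and `y > 0`,
`K_{s-1/2}(2πy) = (√π / Γ(s)) (πy)^{s-1/2} ∫_1^∞ (t²-1)^{s-1} e^{-2πty} dt`. -/
theorem Kbessel_eq_integral (s : ℂ) (hs : 0 < s.re) (y : ℝ) (hy : 0 < y) :
    Kbessel (s - 1 / 2) (2 * π * y)
      = ((Real.sqrt π : ℂ) / Complex.Gamma s) * ((π * y : ℝ) : ℂ) ^ (s - 1 / 2)
        * ∫ t in Ioi (1 : ℝ), ((t ^ 2 - 1 : ℝ) : ℂ) ^ (s - 1)
            * Complex.exp (-(2 * π * t * y : ℝ)) := by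

  have hx : (0:ℝ) < 2 * π * y := by positivity
  have hint : ∫ t in Ioi (1:ℝ), ((t ^ 2 - 1 : ℝ) : ℂ) ^ (s - 1) * Complex.exp (-(2 * π * t * y : ℝ))
      = ∫ t in Ioi (1:ℝ), ((t ^ 2 - 1 : ℝ) : ℂ) ^ (s - 1) * Complex.exp (-((2 * π * y) * t : ℝ)) := by
    refine setIntegral_congr_fun measurableSet_Ioi fun t ht => ?_
    rw [show (2 * π * t * y : ℝ) = (2 * π * y) * t by ring]
  rw [hint, KB.J_side hs hx, KB.K_side s hx,
    show ((π * y : ℝ) : ℂ) = (((2 * π * y) / 2 : ℝ) : ℂ) from congrArg _ (by ring)]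
  linear_combination (-(∫ u in Ioi (0:ℝ), Complex.exp (-(u + (2 * π * y) ^ 2 / (4 * u) : ℝ))
      * (u:ℂ) ^ s * ((u ^ (-(3/2) : ℝ) : ℝ) : ℂ))) * KB.const_identity s hs hx
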